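/- Let m ≥ 4 be an integer divisible by 4 with m ∉ {20, 24, 60}. Then the stabilizer of Φ_m under the multiplication action of (ℤ/mℤ)^× equals the two-element set {1, m/2 − 1} (the class of m/2 − 1 modulo m is indeed a unit, and if m = 4 this set degenerates to {1}). -/

import Mathlib

/-- For `m ≥ 3`, `Phi m ⊆ (ZMod m)ˣ` is the set of units whose least positive residue is at
most `⌊(m-1)/2⌋`; this is the CM type `Φ_m` of the largest simple isogeny factor of the
Jacobian of `y² = xᵐ + 1`. -/
def Phi (m : ℕ) : Set (ZMod m)ˣ :=
  {a : (ZMod m)ˣ | ((a : ZMod m)).val ≤ (m - 1) / 2}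

lemma pow_two_mod_three (t : ℕ) : 2^t % 3 = 1 ∨ 2^t % 3 = 2 := by
  have h : ¬ (3 ∣ 2^t) := by
    intro h
    have h2 : (3:ℕ) ∣ 2 := Nat.Prime.dvd_of_dvd_pow (by norm_num) h
    omega
  omega



/-- odd radical -/
def oddRad (n : ℕ) : ℕ := ∏ p ∈ n.primeFactors.filter (fun p => p ≠ 2), p

lemma oddRad_prime_of_mem {n p : ℕ} (hp : p ∈ n.primeFactors.filter (fun p => p ≠ 2)) :
    p.Prime := by
  have := Finset.mem_filter.mp hp
  exact Nat.prime_of_mem_primeFactors this.1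

lemma oddRad_dvd (n : ℕ) : oddRad n ∣ n := by
  rcases Nat.eq_zero_or_pos n with h | h
  · simp [h]
  · exact dvd_trans
      (Finset.prod_dvd_prod_of_subset _ _ _ (Finset.filter_subset _ _))
      (Nat.prod_primeFactors_dvd n)

lemma oddRad_pos (n : ℕ) : 0 < oddRad n := by
  apply Finset.prod_pos
  intro p hp
  exact (oddRad_prime_of_mem hp).pos

lemma oddRad_odd (n : ℕ) : oddRad n % 2 = 1 := by
  have h2 : ¬ (2 ∣ oddRad n) := by
    intro h
    obtain ⟨q, hq, hdvd⟩ := (Nat.prime_two.prime.dvd_finset_prod_iff _).mp h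
    have hqp := oddRad_prime_of_mem hq
    have : 2 = q := (Nat.prime_dvd_prime_iff_eq Nat.prime_two hqp).mp hdvd
    have := (Finset.mem_filter.mp hq).2
    omega
  omega

lemma dvd_oddRad {n p : ℕ} (hn : n ≠ 0) (hp : p.Prime) (h2 : p ≠ 2) (hdvd : p ∣ n) :
    p ∣ oddRad n := by
  apply Finset.dvd_prod_of_mem
  rw [Finset.mem_filter, Nat.mem_primeFactors]
  exact ⟨⟨hp, hdvd, hn⟩, h2⟩

lemma oddRad_prime_dvd {n p : ℕ} (hp : p.Prime) (h : p ∣ oddRad n) : p ∣ n ∧ p ≠ 2 := by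
  obtain ⟨q, hq, hdvd⟩ := (hp.prime.dvd_finset_prod_iff _).mp h
  have hqp := oddRad_prime_of_mem hq
  have hpq : p = q := (Nat.prime_dvd_prime_iff_eq hp hqp).mp hdvd
  subst hpq
  have h1 := Finset.mem_filter.mp hq
  exact ⟨Nat.dvd_of_mem_primeFactors h1.1, h1.2⟩

lemma coprime_char {n : ℕ} (hn : 1 ≤ n) (c : ℕ) :
    Nat.Coprime c (4*n) ↔ (c % 2 = 1 ∧ Nat.Coprime c (oddRad n)) := by
  constructor
  · intro h
    constructor
    · by_contra hc
      have h2c : 2 ∣ c := by omega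
      have h2m : 2 ∣ 4*n := ⟨2*n, by ring⟩
      have := Nat.dvd_gcd h2c h2m
      rw [h] at this
      omega
    · by_contra hc
      have hg : Nat.gcd c (oddRad n) ≠ 1 := hc
      obtain ⟨p, hp, hpd⟩ := Nat.exists_prime_and_dvd hg
      have hpc : p ∣ c := hpd.trans (Nat.gcd_dvd_left _ _)
      have hpR : p ∣ oddRad n := hpd.trans (Nat.gcd_dvd_right _ _)
      have hpn : p ∣ n := (oddRad_prime_dvd hp hpR).1
      have hpm : p ∣ 4*n := hpn.mul_left 4
      have := Nat.dvd_gcd hpc hpm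
      rw [h] at this
      exact Nat.Prime.one_lt hp |>.ne' (Nat.eq_one_of_dvd_one this ▸ rfl) |>.elim
  · rintro ⟨hodd, hcop⟩
    by_contra hc
    obtain ⟨p, hp, hpd⟩ := Nat.exists_prime_and_dvd hc
    have hpc : p ∣ c := hpd.trans (Nat.gcd_dvd_left _ _)
    have hpm : p ∣ 4*n := hpd.trans (Nat.gcd_dvd_right _ _)
    have hp2 : p ≠ 2 := by
      intro h2
      subst h2
      omega
    have hpn : p ∣ n := by
      rcases (Nat.Prime.dvd_mul hp).mp hpm with h | h
      · exfalso
        have h2le := hp.two_le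
        have hle : p ≤ 4 := Nat.le_of_dvd (by norm_num) h
        interval_cases p
        · exact hp2 rfl
        · omega
        · norm_num at hp
      · exact h
    have hpR : p ∣ oddRad n := dvd_oddRad (by omega) hp hp2 hpn
    have := Nat.dvd_gcd hpc hpR
    rw [hcop] at this
    exact Nat.Prime.one_lt hp |>.ne' (Nat.eq_one_of_dvd_one this ▸ rfl) |>.elim

lemma oddRad_three {n : ℕ} (h : 3 ∣ oddRad n) :
    ∃ R', oddRad n = 3*R' ∧ ¬(3 ∣ R') ∧ R' % 2 = 1 := by
  have h3mem : 3 ∈ n.primeFactors.filter (fun p => p ≠ 2) := by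
    obtain ⟨q, hq, hdvd⟩ := (Nat.prime_three.prime.dvd_finset_prod_iff _).mp h
    have hqp := oddRad_prime_of_mem hq
    have : 3 = q := (Nat.prime_dvd_prime_iff_eq Nat.prime_three hqp).mp hdvd
    rwa [← this] at hq
  set R' := ∏ p ∈ (n.primeFactors.filter (fun p => p ≠ 2)).erase 3, p with hR'def
  refine ⟨R', ?_, ?_, ?_⟩
  · exact (Finset.mul_prod_erase _ (fun p => p) h3mem).symm
  · intro h3
    obtain ⟨q, hq, hdvd⟩ := (Nat.prime_three.prime.dvd_finset_prod_iff _).mp h3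
    have hqp : q.Prime := oddRad_prime_of_mem (Finset.mem_of_mem_erase hq)
    have : 3 = q := (Nat.prime_dvd_prime_iff_eq Nat.prime_three hqp).mp hdvd
    subst this
    exact (Finset.mem_erase.mp hq).1 rfl
  · have h2 : ¬ (2 ∣ ∏ p ∈ (n.primeFactors.filter (fun p => p ≠ 2)).erase 3, p) := by
      intro h2
      obtain ⟨q, hq, hdvd⟩ := (Nat.prime_two.prime.dvd_finset_prod_iff _).mp h2
      have hqp : q.Prime := oddRad_prime_of_mem (Finset.mem_of_mem_erase hq)
      have : 2 = q := (Nat.prime_dvd_prime_iff_eq Nat.prime_two hqp).mp hdvd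
      subst this
      exact (Finset.mem_filter.mp (Finset.mem_of_mem_erase hq)).2 rfl
    omega


lemma modeq_helper {A M q r : ℕ} (h : A = M*q + r) (hr : r < M) : A % M = r := by
  subst h; rw [Nat.mul_add_mod]; exact Nat.mod_eq_of_lt hr

lemma mod_two_cases (a M : ℕ) (h : a < 2*M) :
    (a < M ∧ a % M = a) ∨ (M ≤ a ∧ a % M = a - M) := by
  rcases lt_or_ge a M with h1 | h1
  · exact Or.inl ⟨h1, Nat.mod_eq_of_lt h1⟩
  · refine Or.inr ⟨h1, ?_⟩
    rw [Nat.mod_eq_sub_mod h1, Nat.mod_eq_of_lt (by omega)]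

section CoreN2

variable (n v R N : ℕ)

-- first stage of the N ≥ 2 analysis: forcing μ = 2R, v ≡ 1 mod 2N, and the window fact
lemma coreN2_stage1 (hn : 1 ≤ n) (hv3 : 3 ≤ v) (hvn : v < n) (hvodd : v % 2 = 1)
    (hR1 : 1 ≤ R) (hn_eq : n = R * N) (hN2 : 2 ≤ N)
    (Hl : ∀ c, c < 2*n → c % 2 = 1 → Nat.Coprime c R → (v*c) % (4*n) < 2*n) :
    (∃ k, v = 2*N*k + 1) ∧ (∀ c, c < 2*R → c % 2 = 1 → Nat.Coprime c R → (v*c) % (4*n) < 2*R) := by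
  have hMpos : 0 < 4*n := by omega
  have hRn : R ≤ n := Nat.le_of_dvd (by omega) ⟨N, hn_eq⟩
  -- arithmetic progression elements
  have hAPlt : ∀ t, t < N → 1 + 2*(R*t) < 2*n := by
    intro t ht
    have h1 : R*t + R ≤ R*N := by
      calc R*t + R = R*(t+1) := by ring
      _ ≤ R*N := Nat.mul_le_mul_left R ht
    have h2 : 1 ≤ R*N := by rw [← hn_eq]; omega
    omega
  have hAPodd : ∀ t, (1 + 2*(R*t)) % 2 = 1 := by intro t; omega
  have hAPcop : ∀ t, Nat.Coprime (1 + 2*(R*t)) R := by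
    intro t
    have : (1 : ℕ) + 2*(R*t) = 1 + (2*t)*R := by ring
    rw [this]
    exact (Nat.coprime_add_mul_right_left 1 R (2*t)).mpr (Nat.coprime_one_left R)
  have hap : ∀ t, t < N → (v*(1 + 2*(R*t))) % (4*n) < 2*n := by
    intro t ht
    exact Hl _ (hAPlt t ht) (hAPodd t) (hAPcop t)
  -- the step size μ
  set μ := (2*R*v) % (4*n) with hμdef
  have hμlt : μ < 4*n := Nat.mod_lt _ hMpos
  have hstep : ∀ t, (v*(1 + 2*(R*(t+1)))) % (4*n) = ((v*(1 + 2*(R*t))) % (4*n) + μ) % (4*n) := by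
    intro t
    have he : v*(1 + 2*(R*(t+1))) = v*(1 + 2*(R*t)) + 2*R*v := by ring
    rw [he, Nat.add_mod]
  have hr0 : (v*(1 + 2*(R*0))) % (4*n) = v := by
    have : v*(1 + 2*(R*0)) = v := by ring
    rw [this, Nat.mod_eq_of_lt (by omega)]
  -- rule out μ = 2n
  have hμne : μ ≠ 2*n := by
    intro h2n
    have h1 := hap 1 (by omega)
    have h2 := hstep 0
    rw [hr0, h2n] at h2
    norm_num at h2
    have he1 : (1:ℕ) + 2*(R*1) = 1 + 2*R := by ring
    rw [he1] at h1
    rw [h2] at h1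
    rw [Nat.mod_eq_of_lt (by omega)] at h1
    omega
  have hμR : μ = 2*R := by
    rcases lt_or_ge μ (2*n) with hlt | hge
    · -- increasing chain
      have hchain : ∀ t, t < N → (v*(1 + 2*(R*t))) % (4*n) = v + t*μ := by
        intro t
        induction t with
        | zero => intro _; simpa using hr0
        | succ t ih =>
          intro ht
          have iht := ih (by omega)
          have hprev := hap t (by omega)
          rw [hstep t, iht]
          rw [iht] at hprev
          rw [Nat.mod_eq_of_lt (by omega)]
          have hb : (t+1)*μ = t*μ + μ := by ring
          omega
      have hlast := hap (N-1) (by omega)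
      rw [hchain (N-1) (by omega)] at hlast
      -- 2R ∣ μ
      have hdvd : (2*R) ∣ μ := by
        rw [hμdef]
        rw [Nat.dvd_mod_iff ⟨2*N, by rw [hn_eq]; ring⟩]
        exact ⟨v, rfl⟩
      obtain ⟨w, hw⟩ := hdvd
      -- w = 0 impossible
      have hw0 : w ≠ 0 := by
        intro h0
        rw [h0, mul_zero] at hw
        have : (4*n) ∣ 2*R*v := Nat.dvd_of_mod_eq_zero (hμdef ▸ hw)
        obtain ⟨z, hz⟩ := this
        have hz' : 2*R*v = 2*R*(2*(N*z)) := by rw [hz, hn_eq]; ring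
        have hv2 : v = 2*(N*z) := Nat.eq_of_mul_eq_mul_left (by omega) hz'
        omega
      -- w ≥ 2 impossible
      have hw2 : w < 2 := by
        by_contra hc
        push_neg at hc
        have e1 : 2*(R*N) ≤ 4*(R*(N-1)) := by
          have h1 : 2*N ≤ 4*(N-1) := by omega
          calc 2*(R*N) = R*(2*N) := by ring
          _ ≤ R*(4*(N-1)) := Nat.mul_le_mul_left R h1
          _ = 4*(R*(N-1)) := by ring
        have e2 : 4*(R*(N-1)) ≤ (N-1)*μ := by
          calc 4*(R*(N-1)) = (N-1)*(2*R*2) := by ring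
          _ ≤ (N-1)*(2*R*w) := Nat.mul_le_mul_left _ (Nat.mul_le_mul_left _ hc)
          _ = (N-1)*μ := by rw [← hw]
        have e3 : 2*n = 2*(R*N) := by rw [hn_eq]
        omega
      have hw1 : w = 1 := by omega
      rw [hw1, mul_one] at hw
      exact hw
    · -- decreasing chain
      exfalso
      have hν : 4*n - μ < 2*n := by omega
      set ν := 4*n - μ with hνdef
      have hchain : ∀ t, t < N → (v*(1 + 2*(R*t))) % (4*n) + t*ν = v := by
        intro t
        induction t with
        | zero => intro _; simpa using hr0
        | succ t ih =>
          intro ht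
          have iht := ih (by omega)
          have hprev := hap t (by omega)
          have hnext := hap (t+1) (by omega)
          rw [hstep t] at hnext ⊢
          set r := (v*(1 + 2*(R*t))) % (4*n) with hrdef
          -- r + μ ≥ 4n, else contradiction
          rcases lt_or_ge (r + μ) (4*n) with hcase | hcase
          · rw [Nat.mod_eq_of_lt hcase] at hnext
            omega
          · have : (r + μ) % (4*n) = r + μ - 4*n := by
              rcases mod_two_cases (r + μ) (4*n) (by omega) with ⟨h1, _⟩ | ⟨_, h2⟩
              · omega
              · exact h2
            rw [this]
            have hb : (t+1)*ν = t*ν + ν := by ring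
            omega
      have hlast := hchain (N-1) (by omega)
      -- 2R ∣ ν
      have hdvdμ : (2*R) ∣ μ := by
        rw [hμdef]
        rw [Nat.dvd_mod_iff ⟨2*N, by rw [hn_eq]; ring⟩]
        exact ⟨v, rfl⟩
      have hdvdM : (2*R) ∣ 4*n := ⟨2*N, by rw [hn_eq]; ring⟩
      have hdvdν : (2*R) ∣ ν := Nat.dvd_sub hdvdM hdvdμ
      obtain ⟨w, hw⟩ := hdvdν
      have hw0 : w ≠ 0 := by
        intro h0
        rw [h0, mul_zero] at hw
        omega
      -- (N-1)*ν ≤ v < n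
      have hbound : (N-1)*ν < n := by
        have := hap (N-1) (by omega)
        omega
      have e1 : 2*(R*(N-1)) ≤ (N-1)*ν := by
        calc 2*(R*(N-1)) = (N-1)*(2*R*1) := by ring
        _ ≤ (N-1)*(2*R*w) := Nat.mul_le_mul_left _ (Nat.mul_le_mul_left _ (by omega))
        _ = (N-1)*ν := by rw [← hw]
      have e2 : R*N ≤ 2*(R*(N-1)) := by
        have h1 : N ≤ 2*(N-1) := by omega
        calc R*N ≤ R*(2*(N-1)) := Nat.mul_le_mul_left R h1
        _ = 2*(R*(N-1)) := by ring
      have e3 : n = R*N := hn_eq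
      omega
  -- now μ = 2R : conclude v ≡ 1 mod 2N
  have hq := Nat.div_add_mod (2*R*v) (4*n)
  rw [← hμdef, hμR] at hq
  set q := 2*R*v / (4*n) with hqdef
  have hveq : v = 2*N*q + 1 := by
    have h1 : 2*R*v = 2*R*(2*N*q + 1) := by
      rw [← hq, hn_eq]; ring
    exact Nat.eq_of_mul_eq_mul_left (by omega) h1
  refine ⟨⟨q, hveq⟩, ?_⟩
  -- window fact
  intro c hc hcodd hccop
  have hAPlt' : ∀ t, t < N → c + 2*(R*t) < 2*n := by
    intro t ht
    have h1 : R*t + R ≤ R*N := by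
      calc R*t + R = R*(t+1) := by ring
      _ ≤ R*N := Nat.mul_le_mul_left R ht
    have e3 : n = R*N := hn_eq
    omega
  have hAPcop' : ∀ t, Nat.Coprime (c + 2*(R*t)) R := by
    intro t
    have he : c + 2*(R*t) = c + (2*t)*R := by ring
    rw [he]
    exact (Nat.coprime_add_mul_right_left c R (2*t)).mpr hccop
  have hap' : ∀ t, t < N → (v*(c + 2*(R*t))) % (4*n) < 2*n := by
    intro t ht
    exact Hl _ (hAPlt' t ht) (by omega) (hAPcop' t)
  have hstep' : ∀ t, (v*(c + 2*(R*(t+1)))) % (4*n) = ((v*(c + 2*(R*t))) % (4*n) + μ) % (4*n) := by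
    intro t
    have he : v*(c + 2*(R*(t+1))) = v*(c + 2*(R*t)) + 2*R*v := by ring
    rw [he, Nat.add_mod]
  have hchain' : ∀ t, t < N → (v*(c + 2*(R*t))) % (4*n) = (v*c) % (4*n) + t*(2*R) := by
    intro t
    induction t with
    | zero => intro _; simp
    | succ t ih =>
      intro ht
      have iht := ih (by omega)
      have hprev := hap' t (by omega)
      rw [hstep' t, iht, hμR]
      rw [iht] at hprev
      rw [Nat.mod_eq_of_lt (by omega)]
      have hb : (t+1)*(2*R) = t*(2*R) + 2*R := by ring
      omega
  have hlast := hap' (N-1) (by omega)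
  rw [hchain' (N-1) (by omega)] at hlast
  have e4 : (N-1)*(2*R) + 2*R = 2*n := by
    have h5 : N - 1 + 1 = N := by omega
    calc (N-1)*(2*R) + 2*R = ((N-1)+1)*(2*R) := by ring
    _ = N*(2*R) := by rw [h5]
    _ = 2*n := by rw [hn_eq]; ring
  omega

end CoreN2

lemma coprime_two_of_odd' {R : ℕ} (h : R % 2 = 1) : Nat.Coprime 2 R := by
  unfold Nat.Coprime
  rw [Nat.gcd_rec]
  simp [h]

lemma DOUBLE' (R Q v : ℕ) (hRodd : R % 2 = 1) (hR : 3 ≤ R) (hv : 3 ≤ v)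
    (hvQ : v < Q) (hRQ : R ≤ Q) (hbase : 2*v + R < 2*Q) (hstep : 3*R ≤ 2*Q)
    (W : ∀ j, 1 ≤ j → 2*j < R → Nat.Coprime j R →
      2*((v*j) % Q) < R ∨ 2*((v*j) % Q) + R ≥ 2*Q) : False := by
  have key : ∀ t, 2^(t+1) ≤ R → 2*(v*2^t) < R := by
    intro t
    induction t with
    | zero =>
      intro _
      have h1 := W 1 (le_refl 1) (by omega) (Nat.coprime_one_left R)
      rw [mul_one, Nat.mod_eq_of_lt hvQ] at h1
      rcases h1 with h1 | h1
      · simpa using h1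
      · omega
    | succ t ih =>
      intro h
      have h2 : 2^(t+1) ≤ R := le_trans (Nat.pow_le_pow_right (by norm_num) (by omega)) h
      have ih' := ih h2
      have hlt : 2*(2^(t+1)) < R := by
        have hne : 2*(2^(t+1)) ≠ R := by
          intro he; omega
        have h3 : 2*2^(t+1) = 2^(t+2) := by ring
        omega
      have hcop : Nat.Coprime (2^(t+1)) R :=
        Nat.Coprime.pow_left _ (coprime_two_of_odd' hRodd)
      have h3 := W (2^(t+1)) (Nat.one_le_two_pow) hlt hcop
      have heq : v * 2^(t+1) = 2*(v*2^t) := by ring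
      have hsm : v * 2^(t+1) < R := by omega
      rw [Nat.mod_eq_of_lt (by omega)] at h3
      rcases h3 with h3 | h3 <;> omega
  set L := Nat.log 2 R with hL
  have hL1 : 1 ≤ L := by
    by_contra hc
    push_neg at hc
    have h0 : L = 0 := by omega
    have := Nat.lt_pow_succ_log_self (show 1 < 2 by norm_num) R
    rw [← hL, h0] at this
    norm_num at this
    omega
  have hpow : 2^L ≤ R := Nat.pow_log_le_self 2 (by omega)
  have hkey := key (L-1) (by rwa [Nat.sub_add_cancel hL1])
  have hRpow : R < 2^(L+1) := Nat.lt_pow_succ_log_self (by norm_num) R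
  have h4 : v * R < v * 2^(L+1) := Nat.mul_lt_mul_of_pos_left hRpow (by omega : 0 < v)
  have h5 : v * 2^(L+1) = 4 * (v * 2^(L-1)) := by
    have h6 : (2:ℕ)^(L+1) = 4 * 2^(L-1) := by
      have h7 : L + 1 = (L-1) + 2 := by omega
      rw [h7]; ring
    rw [h6]; ring
  have h6 : v * R < 2 * R := by omega
  have h7 : v < 2 := by
    have := Nat.lt_of_mul_lt_mul_right (a := R) (by omega : v * R < 2 * R)
    omega
  omega

lemma coreN2 (hn : 1 ≤ n) (hv3 : 3 ≤ v) (hvn : v < n) (hvodd : v % 2 = 1)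
    (hRodd : R % 2 = 1) (hn_eq : n = R * N) (hN2 : 2 ≤ N)
    (Hl : ∀ c, c < 2*n → c % 2 = 1 → Nat.Coprime c R → (v*c) % (4*n) < 2*n)
    (h24 : 4*n ≠ 24) : False := by
  have hR1 : 1 ≤ R := by
    rcases Nat.eq_zero_or_pos R with h | h
    · rw [h] at hRodd; omega
    · exact h
  have hRn : R ≤ n := Nat.le_of_dvd (by omega) ⟨N, hn_eq⟩
  obtain ⟨⟨k, hvk⟩, hH'⟩ := coreN2_stage1 n v R N hn hv3 hvn hvodd hR1 hn_eq hN2 Hl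
  have hvR : v < 2*R := by
    have h1 := hH' 1 (by omega) (by omega) (Nat.coprime_one_left R)
    rw [mul_one, Nat.mod_eq_of_lt (by omega)] at h1
    exact h1
  have hR3 : 3 ≤ R := by omega
  have hk1 : 1 ≤ k := by
    rcases Nat.eq_zero_or_pos k with h | h
    · rw [h, mul_zero] at hvk; omega
    · exact h
  -- the window fact
  have hwin : ∀ j, 1 ≤ j → 2*j < R → Nat.Coprime j R →
      ((R + 2*n*(k % 2)) + 2*((v*j) % (2*n))) % (4*n) < 2*R := by
    intro j h1 h2 h3
    have hcop : Nat.Coprime (R + 2*j) R := by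
      have he : R + 2*j = 2*j + 1*R := by ring
      rw [he]
      refine (Nat.coprime_add_mul_right_left (2*j) R 1).mpr ?_
      exact Nat.Coprime.mul (coprime_two_of_odd' hRodd) h3
    have hraw := hH' (R + 2*j) (by omega) (by omega) hcop
    obtain ⟨k2, hk2⟩ : ∃ k2, k = 2*k2 + k % 2 := ⟨k/2, by omega⟩
    have hA : (v*R) % (4*n) = R + 2*n*(k%2) := by
      refine modeq_helper (q := k2) ?_ ?_
      · rw [hvk]
        conv_lhs => rw [hk2]
        rw [hn_eq]; ring
      · rcases Nat.mod_two_eq_zero_or_one k with h | h <;> rw [h] <;> omega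
    have hB : (2*(v*j)) % (4*n) = 2*((v*j) % (2*n)) := by
      have h4 : 4*n = 2*(2*n) := by ring
      rw [h4, Nat.mul_mod_mul_left]
    have he : v*(R + 2*j) = v*R + 2*(v*j) := by ring
    rw [he, Nat.add_mod, hA, hB] at hraw
    exact hraw
  rcases Nat.mod_two_eq_zero_or_one k with hk | hk
  · -- k even : doubling kill
    apply DOUBLE' R (2*n) v hRodd hR3 hv3 (by omega) (by omega) (by omega) (by omega)
    intro j h1 h2 h3
    have hw := hwin j h1 h2 h3
    rw [hk, mul_zero, add_zero] at hw
    set x := (v*j) % (2*n) with hx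
    have hxlt : x < 2*n := Nat.mod_lt _ (by omega)
    rcases mod_two_cases (R + 2*x) (4*n) (by omega) with ⟨h4, h5⟩ | ⟨h4, h5⟩
    · rw [h5] at hw; left; omega
    · right; omega
  · -- k odd
    have hw1 := hwin 1 (le_refl 1) (by omega) (Nat.coprime_one_left R)
    rw [hk, mul_one, mul_one, Nat.mod_eq_of_lt (show v < 2*n by omega)] at hw1
    have hN2eq : N = 2 := by
      -- first extract 2v ≥ 2n - R
      have h2v : 2*n ≤ R + 2*n + 2*v ∧ R + 2*v ≥ 2*n := by
        rcases mod_two_cases (R + 2*n + 2*v) (4*n) (by omega) with ⟨h4, h5⟩ | ⟨h4, h5⟩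
        · rw [h5] at hw1; omega
        · constructor <;> omega
      have hlt : R*(2*N) < R*5 := by
        calc R*(2*N) = 2*(R*N) := by ring
        _ = 2*n := by rw [hn_eq]
        _ < 5*R := by omega
        _ = R*5 := by ring
      have := Nat.lt_of_mul_lt_mul_left hlt
      omega
    have hn2R : n = 2*R := by rw [hn_eq, hN2eq]; ring
    rcases lt_or_ge R 5 with hR5 | hR5
    · -- R = 3, n = 6, contradiction with h24
      have : R = 3 := by omega
      apply h24
      omega
    · -- j = 2 kill
      have h2v : 2*n ≤ R + 2*n + 2*v := by
        rcases mod_two_cases (R + 2*n + 2*v) (4*n) (by omega) with ⟨h4, h5⟩ | ⟨h4, h5⟩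
        · rw [h5] at hw1; omega
        · omega
      have h2v' : R + 2*v ≥ 2*n := by
        rcases mod_two_cases (R + 2*n + 2*v) (4*n) (by omega) with ⟨h4, h5⟩ | ⟨h4, h5⟩
        · rw [h5] at hw1; omega
        · omega
      have hw2 := hwin 2 (by omega) (by omega) (coprime_two_of_odd' hRodd)
      rw [hk, mul_one] at hw2
      have hx2 : (v*2) % (2*n) = v*2 := Nat.mod_eq_of_lt (by omega)
      rw [hx2] at hw2
      rcases mod_two_cases (R + 2*n + 2*(v*2)) (4*n) (by omega) with ⟨h4, h5⟩ | ⟨h4, h5⟩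
      · rw [h5] at hw2; omega
      · rw [h5] at hw2; omega



lemma coreN1 (n v : ℕ) (hv3 : 3 ≤ v) (hvn : v < n) (hvodd : v % 2 = 1)
    (hnodd : n % 2 = 1)
    (hsplit : 3 ∣ n → ∃ R', n = 3*R' ∧ ¬(3 ∣ R') ∧ R' % 2 = 1)
    (Hl : ∀ c, c < 2*n → c % 2 = 1 → Nat.Coprime c n → (v*c) % (4*n) < 2*n)
    (h20 : 4*n ≠ 20) (h60 : 4*n ≠ 60) : False := by
  have hn5 : 5 ≤ n := by omega
  -- raw window
  have WINraw : ∀ j, 1 ≤ j → 2*j < n → Nat.Coprime j n → (v*(n + 2*j)) % (4*n) < 2*n := by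
    intro j h1 h2 h3
    refine Hl (n + 2*j) (by omega) (by omega) ?_
    have he : n + 2*j = 2*j + 1*n := by ring
    rw [he]
    exact (Nat.coprime_add_mul_right_left (2*j) n 1).mpr
      (Nat.Coprime.mul (coprime_two_of_odd' hnodd) h3)
  -- expansion of v*n mod 4n
  obtain ⟨k4, hk4⟩ : ∃ k4, v = 4*k4 + v % 4 := ⟨v/4, by omega⟩
  have hA : (v*n) % (4*n) = n*(v % 4) := by
    refine modeq_helper (q := k4) ?_ ?_
    · conv_lhs => rw [hk4]
      ring
    · have : v % 4 < 4 := Nat.mod_lt _ (by norm_num)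
      have h2 : n*(v%4) ≤ n*3 := Nat.mul_le_mul_left n (by omega)
      omega
  have hexp : ∀ j, (v*(n + 2*j)) % (4*n) = (n*(v % 4) + 2*((v*j) % (2*n))) % (4*n) := by
    intro j
    have he : v*(n + 2*j) = v*n + 2*(v*j) := by ring
    have hB : (2*(v*j)) % (4*n) = 2*((v*j) % (2*n)) := by
      have h4 : 4*n = 2*(2*n) := by ring
      rw [h4, Nat.mul_mod_mul_left]
    rw [he, Nat.add_mod, hA, hB]
  have hv4 : v % 4 = 1 ∨ v % 4 = 3 := by omega
  rcases hv4 with hv4 | hv4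
  · -- v ≡ 1 mod 4 : doubling kill
    apply DOUBLE' n (2*n) v hnodd (by omega) hv3 (by omega) (by omega) (by omega) (by omega)
    intro j h1 h2 h3
    have hw := WINraw j h1 h2 h3
    rw [hexp j, hv4, mul_one] at hw
    set x := (v*j) % (2*n) with hx
    have hxlt : x < 2*n := Nat.mod_lt _ (by omega)
    rcases mod_two_cases (n + 2*x) (4*n) (by omega) with ⟨h4, h5⟩ | ⟨h4, h5⟩
    · rw [h5] at hw; left; omega
    · right; omega
  · -- v ≡ 3 mod 4
    have WIN3 : ∀ j, 1 ≤ j → 2*j < n → Nat.Coprime j n →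
        n < 2*((v*j) % (2*n)) ∧ 2*((v*j) % (2*n)) < 3*n := by
      intro j h1 h2 h3
      have hw := WINraw j h1 h2 h3
      rw [hexp j, hv4] at hw
      set x := (v*j) % (2*n) with hx
      have hxlt : x < 2*n := Nat.mod_lt _ (by omega)
      have hxodd : (n*3 + 2*x) % 2 = 1 := by omega
      rcases mod_two_cases (n*3 + 2*x) (4*n) (by omega) with ⟨h4, h5⟩ | ⟨h4, h5⟩
      · rw [h5] at hw; omega
      · rw [h5] at hw
        constructor <;> omega
    have hj1 := WIN3 1 (le_refl 1) (by omega) (Nat.coprime_one_left n)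
    rw [mul_one, Nat.mod_eq_of_lt (by omega : v < 2*n)] at hj1
    have hj2 := WIN3 2 (by omega) (by omega) (coprime_two_of_odd' hnodd)
    rw [Nat.mod_eq_of_lt (by omega : v*2 < 2*n)] at hj2
    -- now n < 2v, 2*(v*2) < 3n i.e. 4v < 3n
    rcases lt_or_ge n 7 with hn7 | hn7
    · -- n = 5 : m = 20
      have : n = 5 := by omega
      exact h20 (by omega)
    by_cases h3n : (3:ℕ) ∣ n
    · -- 3 | n
      obtain ⟨R', hnR', h3R', hR'odd⟩ := hsplit h3n
      have hR'5 : 5 ≤ R' := by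
        have h1 : R' ≠ 3 := by rintro rfl; exact h3R' ⟨1, rfl⟩
        omega
      -- v range : 3R' < 2v, 4v < 9R'
      have hv_lo : 3*R' < 2*v := by omega
      have hv_hi : 4*v < 9*R' := by omega
      have hvne : v ≠ 2*R' := by omega
      -- helper for j = 3(j/3)+j%3
      have hj3eq : ∀ j : ℕ, j = 3*(j/3) + j % 3 := fun j => (Nat.div_add_mod j 3).symm
      rcases lt_or_gt_of_ne hvne with hneg | hpos
      · -- negative case : v = 2R' - f
        set f := 2*R' - v with hfdef
        have hvf : v + f = 2*R' := by omega
        have hf1 : 1 ≤ f := by omega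
        have hf2 : 2*f < R' := by omega
        have EVALN : ∀ j, f*j ≤ 2*(R'*(j % 3)) →
            (v*j) % (2*n) = 2*(R'*(j % 3)) - f*j := by
          intro j hle
          have h1 : (v + f)*j = 2*(R'*j) := by rw [hvf]; ring
          have h2 : R'*j = 3*(R'*(j/3)) + R'*(j % 3) := by
            conv_lhs => rw [hj3eq j]
            ring
          have h3 : (2*n)*(j/3) = 6*(R'*(j/3)) := by rw [hnR']; ring
          have h5 : R'*(j % 3) ≤ R'*2 := Nat.mul_le_mul_left R' (by omega)
          have heq : v*j = (2*n)*(j/3) + (2*(R'*(j % 3)) - f*j) := by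
            have h6 : v*j + f*j = (v+f)*j := by ring
            omega
          refine modeq_helper heq ?_
          omega
        rcases Nat.lt_or_ge f 2 with hf | hf
        · -- f = 1
          have hf1' : f = 1 := by omega
          have hmod3 : R' % 3 = 1 ∨ R' % 3 = 2 := by
            have : ¬ (R' % 3 = 0) := fun h => h3R' (by omega)
            omega
          rcases hmod3 with hm | hm
          · -- R' % 3 = 1 : use j₀ = R' + 3
            have hR'7 : 7 ≤ R' := by omega
            have hj03 : (R' + 3) % 3 = 1 := by omega
            have hcopj : Nat.Coprime (R' + 3) n := by
              rw [hnR']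
              refine Nat.Coprime.mul_right ?_ ?_
              · have h3d : ¬ (3 ∣ (R' + 3)) := by omega
                exact Nat.coprime_comm.mp ((Nat.prime_three.coprime_iff_not_dvd).mpr h3d)
              · have he : R' + 3 = 3 + 1*R' := by ring
                rw [he]
                exact (Nat.coprime_add_mul_right_left 3 R' 1).mpr
                  ((Nat.prime_three.coprime_iff_not_dvd).mpr h3R')
            have he := EVALN (R' + 3) (by rw [hj03, hf1']; omega)
            rw [hj03] at he
            have hw := WIN3 (R' + 3) (by omega) (by omega) hcopj
            rw [he, hf1', one_mul] at hw
            omega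
          · -- R' % 3 = 2 : use j₀ = R' + 2
            have hj03 : (R' + 2) % 3 = 1 := by omega
            have hcopj : Nat.Coprime (R' + 2) n := by
              rw [hnR']
              refine Nat.Coprime.mul_right ?_ ?_
              · have h3d : ¬ (3 ∣ (R' + 2)) := by omega
                exact Nat.coprime_comm.mp ((Nat.prime_three.coprime_iff_not_dvd).mpr h3d)
              · have he : R' + 2 = 2 + 1*R' := by ring
                rw [he]
                exact (Nat.coprime_add_mul_right_left 2 R' 1).mpr
                  (coprime_two_of_odd' hR'odd)
            have he := EVALN (R' + 2) (by rw [hj03, hf1']; omega)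
            rw [hj03] at he
            have hw := WIN3 (R' + 2) (by omega) (by omega) hcopj
            rw [he, hf1', one_mul] at hw
            omega
        · -- f ≥ 2 : doubling
          have hexf : ∃ t, R' ≤ 2*(2^t*f) := by
            refine ⟨R', ?_⟩
            have h1 : R' < 2^R' := (Nat.lt_two_pow_self (n := R'))
            have h2 : 2^R' ≤ 2^R'*f := Nat.le_mul_of_pos_right _ (by omega)
            omega
          have hspec : R' ≤ 2*(2^(Nat.find hexf)*f) := Nat.find_spec hexf
          set T := Nat.find hexf with hTdef
          have hT1 : 1 ≤ T := by
            by_contra hc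
            push_neg at hc
            have h0 : T = 0 := by omega
            rw [h0, pow_zero, one_mul] at hspec
            omega
          have hmin : ¬ (R' ≤ 2*(2^(T-1)*f)) := hTdef ▸ Nat.find_min hexf (by omega)
          push_neg at hmin
          set x := 2^T * f with hxdef
          have hx2 : x < R' := by
            have hpe : (2:ℕ)^T = 2*2^(T-1) := by
              have h : T = (T-1)+1 := by omega
              conv_lhs => rw [h]
              ring
            have hxe : x = 2*(2^(T-1)*f) := by rw [hxdef, hpe]; ring
            omega
          have hx1 : R' ≤ 2*x := hspec
          have hcopj1 : Nat.Coprime (2^T) n := Nat.Coprime.pow_left _ (coprime_two_of_odd' hnodd)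
          have hb1 : 2*(2^T) ≤ x := by
            have h1 : 2^T*2 ≤ 2^T*f := Nat.mul_le_mul_left _ hf
            have h2 : 2*(2^T) = 2^T*2 := by ring
            omega
          have hxc : f*(2^T) = x := by rw [hxdef]; ring
          rcases pow_two_mod_three T with hm1 | hm1
          · -- 2^T % 3 = 1 : immediate kill
            have he := EVALN (2^T) (by rw [hm1]; omega)
            rw [hm1] at he
            have hw := WIN3 (2^T) Nat.one_le_two_pow (by omega) hcopj1
            rw [he, hxc] at hw
            omega
          · -- 2^T % 3 = 2 : use 2^(T+1)
            have hpe : (2:ℕ)^(T+1) = 2*2^T := by ring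
            have hm2 : 2^(T+1) % 3 = 1 := by omega
            have hxc2 : f*(2^(T+1)) = 2*x := by rw [hxdef]; ring
            have he := EVALN (2^(T+1)) (by rw [hm2, hxc2]; omega)
            rw [hm2, hxc2] at he
            have hcopj2 : Nat.Coprime (2^(T+1)) n :=
              Nat.Coprime.pow_left _ (coprime_two_of_odd' hnodd)
            have hw := WIN3 (2^(T+1)) Nat.one_le_two_pow (by omega) hcopj2
            rw [he] at hw
            omega
      · -- positive case : v = 2R' + f
        set f := v - 2*R' with hfdef
        have hvf : v = 2*R' + f := by omega
        have hf1 : 1 ≤ f := by omega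
        have hf4 : 4*f < R' := by omega
        have EVALP : ∀ j, f*j + 2*(R'*(j % 3)) < 6*R' →
            (v*j) % (2*n) = 2*(R'*(j % 3)) + f*j := by
          intro j hlt
          have h1 : v*j = 2*(R'*j) + f*j := by rw [hvf]; ring
          have h2 : R'*j = 3*(R'*(j/3)) + R'*(j % 3) := by
            conv_lhs => rw [hj3eq j]
            ring
          have h3 : (2*n)*(j/3) = 6*(R'*(j/3)) := by rw [hnR']; ring
          have heq : v*j = (2*n)*(j/3) + (2*(R'*(j % 3)) + f*j) := by omega
          refine modeq_helper heq ?_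
          omega
        rcases Nat.lt_or_ge f 2 with hf | hf
        · -- f = 1
          have hf1' : f = 1 := by omega
          have hmod3 : R' % 3 = 1 ∨ R' % 3 = 2 := by
            have : ¬ (R' % 3 = 0) := fun h => h3R' (by omega)
            omega
          rcases hmod3 with hm | hm
          · -- R' % 3 = 1 : use j₀ = R' + 1
            have hj03 : (R' + 1) % 3 = 2 := by omega
            have hcopj : Nat.Coprime (R' + 1) n := by
              rw [hnR']
              refine Nat.Coprime.mul_right ?_ ?_
              · have h3d : ¬ (3 ∣ (R' + 1)) := by omega
                exact Nat.coprime_comm.mp ((Nat.prime_three.coprime_iff_not_dvd).mpr h3d)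
              · have he : R' + 1 = 1 + 1*R' := by ring
                rw [he]
                exact (Nat.coprime_add_mul_right_left 1 R' 1).mpr (Nat.coprime_one_left R')
            have he := EVALP (R' + 1) (by rw [hj03, hf1']; omega)
            rw [hj03] at he
            have hw := WIN3 (R' + 1) (by omega) (by omega) hcopj
            rw [he, hf1', one_mul] at hw
            omega
          · -- R' % 3 = 2
            rcases Nat.lt_or_ge R' 7 with hR7 | hR7
            · -- R' = 5 : m = 60
              have : R' = 5 := by omega
              exact h60 (by omega)
            · -- use j₀ = R' + 3
              have hj03 : (R' + 3) % 3 = 2 := by omega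
              have hcopj : Nat.Coprime (R' + 3) n := by
                rw [hnR']
                refine Nat.Coprime.mul_right ?_ ?_
                · have h3d : ¬ (3 ∣ (R' + 3)) := by omega
                  exact Nat.coprime_comm.mp ((Nat.prime_three.coprime_iff_not_dvd).mpr h3d)
                · have he : R' + 3 = 3 + 1*R' := by ring
                  rw [he]
                  exact (Nat.coprime_add_mul_right_left 3 R' 1).mpr
                    ((Nat.prime_three.coprime_iff_not_dvd).mpr h3R')
              have he := EVALP (R' + 3) (by rw [hj03, hf1']; omega)
              rw [hj03] at he
              have hw := WIN3 (R' + 3) (by omega) (by omega) hcopj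
              rw [he, hf1', one_mul] at hw
              omega
        · -- f ≥ 2 : doubling
          have hexf : ∃ t, R' ≤ 2*(2^t*f) := by
            refine ⟨R', ?_⟩
            have h1 : R' < 2^R' := (Nat.lt_two_pow_self (n := R'))
            have h2 : 2^R' ≤ 2^R'*f := Nat.le_mul_of_pos_right _ (by omega)
            omega
          have hspec : R' ≤ 2*(2^(Nat.find hexf)*f) := Nat.find_spec hexf
          set T := Nat.find hexf with hTdef
          have hT1 : 1 ≤ T := by
            by_contra hc
            push_neg at hc
            have h0 : T = 0 := by omega
            rw [h0, pow_zero, one_mul] at hspec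
            omega
          have hmin : ¬ (R' ≤ 2*(2^(T-1)*f)) := hTdef ▸ Nat.find_min hexf (by omega)
          push_neg at hmin
          set x := 2^T * f with hxdef
          have hx2 : x < R' := by
            have hpe : (2:ℕ)^T = 2*2^(T-1) := by
              have h : T = (T-1)+1 := by omega
              conv_lhs => rw [h]
              ring
            have hxe : x = 2*(2^(T-1)*f) := by rw [hxdef, hpe]; ring
            omega
          have hx1 : R' ≤ 2*x := hspec
          have hcopj1 : Nat.Coprime (2^T) n := Nat.Coprime.pow_left _ (coprime_two_of_odd' hnodd)
          have hb1 : 2*(2^T) ≤ x := by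
            have h1 : 2^T*2 ≤ 2^T*f := Nat.mul_le_mul_left _ hf
            have h2 : 2*(2^T) = 2^T*2 := by ring
            omega
          have hxc : f*(2^T) = x := by rw [hxdef]; ring
          rcases pow_two_mod_three T with hm1 | hm1
          · -- 2^T % 3 = 1 : use 2^(T+1) (which is ≡ 2)
            have hpe : (2:ℕ)^(T+1) = 2*2^T := by ring
            have hm2 : 2^(T+1) % 3 = 2 := by omega
            have hxc2 : f*(2^(T+1)) = 2*x := by rw [hxdef]; ring
            have he := EVALP (2^(T+1)) (by rw [hm2, hxc2]; omega)
            rw [hm2, hxc2] at he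
            have hcopj2 : Nat.Coprime (2^(T+1)) n :=
              Nat.Coprime.pow_left _ (coprime_two_of_odd' hnodd)
            have hw := WIN3 (2^(T+1)) Nat.one_le_two_pow (by omega) hcopj2
            rw [he] at hw
            omega
          · -- 2^T % 3 = 2 : immediate kill
            have he := EVALP (2^T) (by rw [hm1, hxc]; omega)
            rw [hm1, hxc] at he
            have hw := WIN3 (2^T) Nat.one_le_two_pow (by omega) hcopj1
            rw [he] at hw
            omega
    · -- ¬ 3 | n : j = 3 kill
      have hcop3 : Nat.Coprime 3 n := (Nat.prime_three.coprime_iff_not_dvd).mpr h3n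
      have hj3 := WIN3 3 (by omega) (by omega) hcop3
      rcases lt_or_ge (v*3) (2*n) with hc | hc
      · rw [Nat.mod_eq_of_lt hc] at hj3
        omega
      · have h5 : (v*3) % (2*n) = v*3 - 2*n := by
          rcases mod_two_cases (v*3) (2*n) (by omega) with ⟨h4, h5⟩ | ⟨h4, h5⟩
          · omega
          · exact h5
        rw [h5] at hj3
        omega

theorem core (n v : ℕ) (hn : 1 ≤ n) (hv3 : 3 ≤ v) (hvn : v < n)
    (hcop : Nat.Coprime v (4*n))
    (h20 : 4*n ≠ 20) (h24 : 4*n ≠ 24) (h60 : 4*n ≠ 60)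
    (H : ∀ c, c < 2*n → Nat.Coprime c (4*n) → (v*c) % (4*n) < 2*n) : False := by
  have hRodd := oddRad_odd n
  have hRdvd := oddRad_dvd n
  have hn_eq : n = (oddRad n) * (n / oddRad n) := (Nat.mul_div_cancel' hRdvd).symm
  have hvodd : v % 2 = 1 := ((coprime_char hn v).mp hcop).1
  have Hl : ∀ c, c < 2*n → c % 2 = 1 → Nat.Coprime c (oddRad n) → (v*c) % (4*n) < 2*n :=
    fun c h1 h2 h3 => H c h1 ((coprime_char hn c).mpr ⟨h2, h3⟩)
  rcases Nat.lt_or_ge (n / oddRad n) 2 with hN | hN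
  · -- N = 1, n = oddRad n
    have hRpos : 0 < oddRad n := oddRad_pos n
    have hRle : oddRad n ≤ n := Nat.le_of_dvd (by omega) hRdvd
    have hN0 : 0 < n / oddRad n := Nat.div_pos hRle hRpos
    have hN1 : n / oddRad n = 1 := by omega
    have hnR : n = oddRad n := by
      calc n = oddRad n * (n / oddRad n) := hn_eq
      _ = oddRad n := by rw [hN1, mul_one]
    refine coreN1 n v hv3 hvn hvodd (by rw [hnR]; exact hRodd) ?_ ?_ h20 h60
    · intro h3
      obtain ⟨R', h1, h2, h3'⟩ := oddRad_three (n := n) (by rw [← hnR]; exact h3)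
      exact ⟨R', by rw [hnR]; exact h1, h2, h3'⟩
    · intro c h1 h2 h3
      exact Hl c h1 h2 (by rw [← hnR]; exact h3)
  · exact coreN2 hn hv3 hvn hvodd hRodd hn_eq hN Hl h24

/-- Lemma 3.2.1, generic `4 ∣ m` case. Let `m ≥ 4` be divisible by `4` with
`m ∉ {20, 24, 60}`. Then the class of `m/2 - 1` is a unit of `ℤ/mℤ`, and the stabilizer of
`Φ_m` under the multiplication action of `(ℤ/mℤ)ˣ` is exactly `{1, m/2 - 1}`. -/
theorem phi_stabilizer_of_four_dvd (m : ℕ) (hm : 4 ≤ m) (h4 : 4 ∣ m)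
    (h20 : m ≠ 20) (h24 : m ≠ 24) (h60 : m ≠ 60) :
    IsUnit ((m / 2 - 1 : ℕ) : ZMod m) ∧
      ∀ u : (ZMod m)ˣ,
        (fun a : (ZMod m)ˣ => u * a) '' Phi m = Phi m ↔
          (u : ZMod m) = 1 ∨ (u : ZMod m) = ((m / 2 - 1 : ℕ) : ZMod m) := by
  obtain ⟨n, rfl⟩ := h4
  have hn : 1 ≤ n := by omega
  haveI : NeZero (4*n) := ⟨by omega⟩
  haveI : Fact (1 < 4*n) := ⟨by omega⟩
  have hhalf : (4*n) / 2 - 1 = 2*n - 1 := by omega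
  -- coprimality of 2n-1 with 4n
  have hscop : Nat.Coprime (2*n - 1) (4*n) := by
    have h2 : Nat.gcd (2*n-1) (4*n) ∣ 2 := by
      have hd1 : Nat.gcd (2*n-1) (4*n) ∣ 4*n := Nat.gcd_dvd_right _ _
      have hd2 : Nat.gcd (2*n-1) (4*n) ∣ 2*(2*n-1) := Dvd.dvd.mul_left (Nat.gcd_dvd_left _ _) 2
      have hsub := Nat.dvd_sub hd1 hd2
      have he : 4*n - 2*(2*n-1) = 2 := by omega
      rwa [he] at hsub
    have hodd : Nat.gcd (2*n-1) (4*n) ∣ 2*n - 1 := Nat.gcd_dvd_left _ _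
    rcases (Nat.dvd_prime Nat.prime_two).mp h2 with h | h
    · exact h
    · exfalso
      rw [h] at hodd
      obtain ⟨t, ht⟩ := hodd
      omega
  set su : (ZMod (4*n))ˣ := ZMod.unitOfCoprime _ hscop with hsudef
  have hsucoe : (su : ZMod (4*n)) = ((2*n - 1 : ℕ) : ZMod (4*n)) := ZMod.coe_unitOfCoprime _ hscop
  have hsuval : (su : ZMod (4*n)).val = 2*n - 1 := by
    rw [hsucoe, ZMod.val_cast_of_lt (by omega)]
  -- membership criterion
  have memPhi : ∀ a : (ZMod (4*n))ˣ, a ∈ Phi (4*n) ↔ ((a : ZMod (4*n)).val < 2*n) := by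
    intro a
    unfold Phi
    simp only [Set.mem_setOf_eq]
    omega
  -- val of product
  have hvmul : ∀ u a : (ZMod (4*n))ˣ,
      ((u*a : (ZMod (4*n))ˣ) : ZMod (4*n)).val
        = ((u : ZMod (4*n)).val * (a : ZMod (4*n)).val) % (4*n) := by
    intro u a
    rw [Units.val_mul, ZMod.val_mul]
  -- oddness of coprime values
  have hodd_of_cop : ∀ c : ℕ, Nat.Coprime c (4*n) → c % 2 = 1 := by
    intro c hc
    by_contra hcontra
    have h2c : 2 ∣ c := by omega
    have h2m : (2:ℕ) ∣ 4*n := ⟨2*n, by ring⟩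
    have := Nat.dvd_gcd h2c h2m
    rw [hc] at this
    omega
  have hpos_of_cop : ∀ c : ℕ, Nat.Coprime c (4*n) → 1 ≤ c := by
    intro c hc
    rcases Nat.eq_zero_or_pos c with h0 | h
    · rw [h0] at hc
      have := Nat.coprime_zero_left (4*n) |>.mp hc
      omega
    · exact h
  -- the key multiplication formula for s = 2n-1
  have hmul_s : ∀ c : ℕ, 1 ≤ c → c < 2*n → c % 2 = 1 → ((2*n-1)*c) % (4*n) = 2*n - c := by
    intro c h1 h2 h3
    obtain ⟨t, ht⟩ : ∃ t, c = 2*t+1 := ⟨c/2, by omega⟩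
    have hn1 : (2*n - 1) + 1 = 2*n := by omega
    have hkey : (2*n-1)*c + c = (4*n)*t + 2*n := by
      calc (2*n-1)*c + c = ((2*n-1)+1)*c := by ring
      _ = (2*n)*c := by rw [hn1]
      _ = (4*n)*t + 2*n := by rw [ht]; ring
    refine modeq_helper (q := t) (by omega) (by omega)
  -- s maps Phi into Phi
  have hs_pt : ∀ a ∈ Phi (4*n), su * a ∈ Phi (4*n) := by
    intro a ha
    rw [memPhi] at ha ⊢
    have hacop := ZMod.val_coe_unit_coprime a
    rw [hvmul, hsuval, hmul_s _ (hpos_of_cop _ hacop) ha (hodd_of_cop _ hacop)]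
    have := hpos_of_cop _ hacop
    omega
  -- pointwise implies image equality
  have stab_of_pointwise : ∀ u : (ZMod (4*n))ˣ,
      (∀ a ∈ Phi (4*n), u*a ∈ Phi (4*n)) → (fun a => u*a) '' Phi (4*n) = Phi (4*n) := by
    intro u h
    apply Set.eq_of_subset_of_ncard_le
    · rintro _ ⟨a, ha, rfl⟩; exact h a ha
    · exact le_of_eq (Set.ncard_image_of_injective _ (mul_right_injective u)).symm
    · exact Set.toFinite _
  -- H from pointwise stabilization
  have HofPt : ∀ w : (ZMod (4*n))ˣ, (∀ a ∈ Phi (4*n), w*a ∈ Phi (4*n)) →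
      ∀ c, c < 2*n → Nat.Coprime c (4*n) → ((w : ZMod (4*n)).val * c) % (4*n) < 2*n := by
    intro w hw c hc hcc
    have ha : (ZMod.unitOfCoprime c hcc) ∈ Phi (4*n) := by
      rw [memPhi, ZMod.coe_unitOfCoprime, ZMod.val_cast_of_lt (by omega)]
      exact hc
    have h2 := hw _ ha
    rw [memPhi, hvmul, ZMod.coe_unitOfCoprime, ZMod.val_cast_of_lt (by omega)] at h2
    exact h2
  constructor
  · rw [hhalf]
    exact ⟨su, hsucoe.symm⟩
  intro u
  constructor
  · -- hard direction
    intro himg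
    have hpt : ∀ a ∈ Phi (4*n), u*a ∈ Phi (4*n) := by
      intro a ha
      rw [← himg]
      exact Set.mem_image_of_mem _ ha
    have h1mem : (1 : (ZMod (4*n))ˣ) ∈ Phi (4*n) := by
      rw [memPhi, Units.val_one, ZMod.val_one (4*n)]
      omega
    have humem := hpt 1 h1mem
    rw [mul_one, memPhi] at humem
    set v := (u : ZMod (4*n)).val with hvdef
    have hvcop : Nat.Coprime v (4*n) := ZMod.val_coe_unit_coprime u
    have hvodd : v % 2 = 1 := hodd_of_cop v hvcop
    have hv1 : 1 ≤ v := hpos_of_cop v hvcop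
    have hucast : ((v : ℕ) : ZMod (4*n)) = (u : ZMod (4*n)) := by
      rw [hvdef]
      simp [ZMod.natCast_val, ZMod.cast_id]
    rcases eq_or_ne v 1 with h1 | hne1
    · left
      rw [← hucast, h1]
      simp
    rcases eq_or_ne v (2*n - 1) with hs | hnes
    · right
      rw [← hucast, hs, hhalf]
    exfalso
    have hm20 : 4*n ≠ 20 := h20
    have hm24 : 4*n ≠ 24 := h24
    have hm60 : 4*n ≠ 60 := h60
    have hvn2 : v ≠ n := by
      intro he
      have hg : Nat.gcd n (4*n) = n := Nat.gcd_eq_left ⟨4, by ring⟩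
      rw [he] at hvcop
      have : Nat.gcd n (4*n) = 1 := hvcop
      omega
    rcases lt_or_gt_of_ne hvn2 with hlt | hgt
    · exact core n v hn (by omega) hlt hvcop hm20 hm24 hm60 (HofPt u hpt)
    · -- reflect by su
      have hu'pt : ∀ a ∈ Phi (4*n), (su*u)*a ∈ Phi (4*n) := by
        intro a ha
        rw [mul_assoc]
        exact hs_pt _ (hpt a ha)
      have hv' : ((su*u : (ZMod (4*n))ˣ) : ZMod (4*n)).val = 2*n - v := by
        rw [hvmul, hsuval, ← hvdef, hmul_s v hv1 humem hvodd]
      have hv'cop : Nat.Coprime (2*n - v) (4*n) := by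
        have := ZMod.val_coe_unit_coprime (su*u)
        rwa [hv'] at this
      have H' := HofPt (su*u) hu'pt
      rw [hv'] at H'
      refine core n (2*n - v) hn ?_ (by omega) hv'cop hm20 hm24 hm60 H'
      -- 3 ≤ 2n - v : it's odd, positive, and ≠ 1 (since v ≠ 2n-1)
      have hodd' : (2*n - v) % 2 = 1 := by omega
      omega
  · -- easy direction
    intro hcase
    rcases hcase with h1 | hs
    · have hu1 : u = 1 := Units.ext (by rw [h1, Units.val_one])
      rw [hu1]
      have hid : (fun a : (ZMod (4*n))ˣ => 1 * a) = id := by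
        funext a
        simp
      rw [hid, Set.image_id]
    · have hcast2 : ((4*n/2 - 1 : ℕ) : ZMod (4*n)) = ((2*n - 1 : ℕ) : ZMod (4*n)) := by
        rw [hhalf]
      have hu_eq : u = su := Units.ext (by rw [hs, hcast2, hsucoe])
      rw [hu_eq]
      exact stab_of_pointwise su hs_pt
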